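/- Let E ∈ ℂ not be an eigenvalue of h. Then the following identity of 2m×2m matrices (written in m×m blocks) holds: [[0, −B_n⁻¹], [g_{n,1}, g_{n,n}]] = T(E) · [[g_{1,1}, g_{1,n}], [−C_1⁻¹, 0]]. -/
import Mathlib
set_option maxHeartbeats 1000000

open Matrix

noncomputable def tstep {m : ℕ} (A B C : Matrix (Fin m) (Fin m) ℂ) (E : ℂ) :
    Matrix (Fin m ⊕ Fin m) (Fin m ⊕ Fin m) ℂ :=
  Matrix.fromBlocks (B⁻¹ * (E • 1 - A)) (-(B⁻¹ * C)) 1 0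

/-- The transfer matrix `T(E) = t_n(E) ⋯ t_1(E)` (0-indexed: `t_{n-1} ⋯ t_0`). -/
noncomputable def transfer {n m : ℕ} (A B C : Fin n → Matrix (Fin m) (Fin m) ℂ) (E : ℂ) :
    Matrix (Fin m ⊕ Fin m) (Fin m ⊕ Fin m) ℂ :=
  ((List.ofFn fun k : Fin n => tstep (A k) (B k) (C k) E).reverse).prod

/-- The block tridiagonal matrix `h` of the open chain:
diagonal blocks `A_k`, upper blocks `B_k`, lower blocks `C_k`. -/
noncomputable def hopen {n m : ℕ} (A B C : Fin n → Matrix (Fin m) (Fin m) ℂ) :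
    Matrix (Fin n × Fin m) (Fin n × Fin m) ℂ :=
  fun p q =>
    (if p.1 = q.1 then A p.1 p.2 q.2 else 0)
    + (if (p.1 : ℕ) + 1 = (q.1 : ℕ) then B p.1 p.2 q.2 else 0)
    + (if (q.1 : ℕ) + 1 = (p.1 : ℕ) then C p.1 p.2 q.2 else 0)

/-- The `(i,j)` block (of size `m × m`) of an `(nm) × (nm)` matrix. -/
def blk {n m : ℕ} (M : Matrix (Fin n × Fin m) (Fin n × Fin m) ℂ) (i j : Fin n) :
    Matrix (Fin m) (Fin m) ℂ :=
  fun p q => M (i, p) (j, q)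

lemma blk_mul {n m : ℕ} (M N : Matrix (Fin n × Fin m) (Fin n × Fin m) ℂ) (i j : Fin n) :
    blk (M * N) i j = ∑ l : Fin n, blk M i l * blk N l j := by
  ext p q
  simp [blk, Matrix.mul_apply, Fintype.sum_prod_type, Matrix.sum_apply]

lemma blk_one {n m : ℕ} (i j : Fin n) :
    blk (1 : Matrix (Fin n × Fin m) (Fin n × Fin m) ℂ) i j = if i = j then 1 else 0 := by
  ext p q
  by_cases h : i = j <;> simp [blk, Matrix.one_apply, Prod.ext_iff, h]

lemma blk_hE {n m : ℕ} (A B C : Fin n → Matrix (Fin m) (Fin m) ℂ) (E : ℂ) (k l : Fin n) :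
    blk (hopen A B C - E • 1) k l =
      (if k = l then A k - E • 1 else 0) + (if (k : ℕ) + 1 = (l : ℕ) then B k else 0)
      + (if (l : ℕ) + 1 = (k : ℕ) then C k else 0) := by
  ext p q
  simp only [blk, Matrix.sub_apply, hopen, Matrix.smul_apply, Matrix.one_apply,
    Matrix.add_apply, smul_eq_mul, mul_ite, mul_one, mul_zero, Prod.mk.injEq, ite_and,
    Matrix.zero_apply]
  split_ifs <;> simp_all [Fin.ext_iff, Matrix.one_apply]

lemma hrec {n m : ℕ} (A B C : Fin n → Matrix (Fin m) (Fin m) ℂ) (E : ℂ)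
    (g : Matrix (Fin n × Fin m) (Fin n × Fin m) ℂ)
    (hg : (hopen A B C - E • 1) * g = 1) (k j : Fin n) :
    (A k - E • 1) * blk g k j
      + (if h : (k : ℕ) + 1 < n then B k * blk g ⟨(k : ℕ) + 1, h⟩ j else 0)
      + (if h : 0 < (k : ℕ) then C k * blk g ⟨(k : ℕ) - 1, by omega⟩ j else 0)
      = if k = j then 1 else 0 := by
  have h2 : blk ((hopen A B C - E • 1) * g) k j = blk 1 k j := by rw [hg]
  rw [blk_mul, blk_one] at h2
  simp only [blk_hE, add_mul, Finset.sum_add_distrib] at h2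
  rw [← h2]
  congr 1
  · congr 1
    · simp [ite_mul, zero_mul]
    · by_cases hk : (k : ℕ) + 1 < n
      · rw [dif_pos hk, Finset.sum_eq_single (⟨(k : ℕ) + 1, hk⟩ : Fin n)]
        · simp
        · intro l _ hl
          rw [if_neg, zero_mul]
          intro hc; exact hl (Fin.ext hc.symm)
        · simp
      · rw [dif_neg hk, eq_comm, Finset.sum_eq_zero]
        intro l _
        rw [if_neg, zero_mul]
        intro hc; exact hk (hc ▸ l.isLt)
  · by_cases hk : 0 < (k : ℕ)
    · rw [dif_pos hk, Finset.sum_eq_single (⟨(k : ℕ) - 1, by omega⟩ : Fin n)]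
      · rw [if_pos (by simp; omega)]
      · intro l _ hl
        rw [if_neg, zero_mul]
        intro hc; exact hl (Fin.ext (by simp only []; omega))
      · simp
    · rw [dif_neg hk, eq_comm, Finset.sum_eq_zero]
      intro l _
      rw [if_neg, zero_mul]
      intro hc; omega

lemma prod_rec {α : Type*} [Monoid α] (t : ℕ → α) (w : ℕ → α) :
    ∀ N, (∀ k < N, w (k + 1) = t k * w k) →
      ((List.ofFn fun i : Fin N => t i).reverse).prod * w 0 = w N := by
  intro N
  induction N with
  | zero => simp
  | succ N ih =>
    intro h
    rw [List.ofFn_succ']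
    simp only [List.concat_eq_append, List.reverse_append, List.reverse_cons, List.reverse_nil,
      List.nil_append, List.cons_append, List.prod_cons, Fin.val_last, Fin.coe_castSucc]
    rw [mul_assoc, ih (fun k hk => h k (by omega)), h N (by omega)]

lemma isolate1 {m : ℕ} (Bk Binv Ck M P Y R D : Matrix (Fin m) (Fin m) ℂ)
    (hB : Binv * Bk = 1) (e : -M * P + Bk * Y + Ck * R = D) :
    Y = Binv * M * P + -(Binv * Ck) * R + Binv * D := by
  have e' : Bk * Y = D - -M * P - Ck * R := by rw [← e]; abel
  calc Y = (Binv * Bk) * Y := by rw [hB, one_mul]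
    _ = Binv * (Bk * Y) := by rw [mul_assoc]
    _ = Binv * (D - -M * P - Ck * R) := by rw [e']
    _ = Binv * M * P + -(Binv * Ck) * R + Binv * D := by noncomm_ring

lemma isolate2 {m : ℕ} (Binv Ck M P R D : Matrix (Fin m) (Fin m) ℂ)
    (e : -M * P + 0 + Ck * R = D) :
    Binv * M * P + -(Binv * Ck) * R = -(Binv * D) := by
  have e' : M * P - Ck * R = -D := by rw [← e]; noncomm_ring
  calc Binv * M * P + -(Binv * Ck) * R = Binv * (M * P - Ck * R) := by noncomm_ring
    _ = Binv * (-D) := by rw [e']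
    _ = -(Binv * D) := by noncomm_ring

noncomputable def Wseq {n m : ℕ} (hn : 2 ≤ n) (B C : Fin n → Matrix (Fin m) (Fin m) ℂ)
    (g : Matrix (Fin n × Fin m) (Fin n × Fin m) ℂ) :
    ℕ → Matrix (Fin m ⊕ Fin m) (Fin m ⊕ Fin m) ℂ := fun k =>
  if k = 0 then
    Matrix.fromBlocks (blk g ⟨0, by omega⟩ ⟨0, by omega⟩) (blk g ⟨0, by omega⟩ ⟨n - 1, by omega⟩)
      (-(C ⟨0, by omega⟩)⁻¹) 0
  else if hk : k < n then
    Matrix.fromBlocks (blk g ⟨k, hk⟩ ⟨0, by omega⟩) (blk g ⟨k, hk⟩ ⟨n - 1, by omega⟩)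
      (blk g ⟨k - 1, by omega⟩ ⟨0, by omega⟩) (blk g ⟨k - 1, by omega⟩ ⟨n - 1, by omega⟩)
  else
    Matrix.fromBlocks 0 (-(B ⟨n - 1, by omega⟩)⁻¹)
      (blk g ⟨n - 1, by omega⟩ ⟨0, by omega⟩) (blk g ⟨n - 1, by omega⟩ ⟨n - 1, by omega⟩)


lemma step0 {n m : ℕ} (hn : 2 ≤ n) (A B C : Fin n → Matrix (Fin m) (Fin m) ℂ)
    (hB : ∀ k, IsUnit (B k)) (hC : ∀ k, IsUnit (C k)) (E : ℂ)
    (g : Matrix (Fin n × Fin m) (Fin n × Fin m) ℂ)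
    (hg : (hopen A B C - E • 1) * g = 1) (k : ℕ) (hk : k < n)
    (hk0 : k = 0) :
    Wseq hn B C g (k + 1) =
      tstep (A ⟨k, hk⟩) (B ⟨k, hk⟩) (C ⟨k, hk⟩) E * Wseq hn B C g k := by
  have hBi : (B (⟨k, hk⟩ : Fin n))⁻¹ * B (⟨k, hk⟩ : Fin n) = 1 :=
    Matrix.nonsing_inv_mul _ ((Matrix.isUnit_iff_isUnit_det _).mp (hB (⟨k, hk⟩ : Fin n)))
  have hCi : C (⟨k, hk⟩ : Fin n) * (C (⟨k, hk⟩ : Fin n))⁻¹ = 1 :=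
    Matrix.mul_nonsing_inv _ ((Matrix.isUnit_iff_isUnit_det _).mp (hC (⟨k, hk⟩ : Fin n)))
  have hMsub : A (⟨k, hk⟩ : Fin n) - E • (1 : Matrix (Fin m) (Fin m) ℂ)
      = -(E • 1 - A (⟨k, hk⟩ : Fin n)) := by abel
  subst hk0
  have h1n : 1 < n := by omega
  have hKj0 : (⟨0, hk⟩ : Fin n) = (⟨0, by omega⟩ : Fin n) := rfl
  have hKjn : (⟨0, hk⟩ : Fin n) ≠ (⟨n - 1, by omega⟩ : Fin n) := by
    intro hc; rw [Fin.ext_iff] at hc; simp at hc; omega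
  rw [show Wseq hn B C g 0
      = Matrix.fromBlocks (blk g (⟨0, by omega⟩ : Fin n) (⟨0, by omega⟩ : Fin n)) (blk g (⟨0, by omega⟩ : Fin n) (⟨n - 1, by omega⟩ : Fin n))
        (-(C (⟨0, hk⟩ : Fin n))⁻¹) 0 from by
    rw [Wseq]; rw [if_pos rfl]]
  rw [show Wseq hn B C g 1
      = Matrix.fromBlocks (blk g ⟨1, h1n⟩ (⟨0, by omega⟩ : Fin n)) (blk g ⟨1, h1n⟩ (⟨n - 1, by omega⟩ : Fin n))
        (blk g (⟨0, by omega⟩ : Fin n) (⟨0, by omega⟩ : Fin n)) (blk g (⟨0, by omega⟩ : Fin n) (⟨n - 1, by omega⟩ : Fin n)) from by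
    rw [Wseq]; rw [if_neg one_ne_zero, dif_pos h1n]]
  rw [tstep, Matrix.fromBlocks_multiply, Matrix.fromBlocks_inj]
  refine ⟨?_, ?_, by simp, by simp⟩
  · have e := hrec A B C E g hg (⟨0, hk⟩ : Fin n) (⟨0, by omega⟩ : Fin n)
    rw [dif_pos (show ((⟨0, hk⟩ : Fin n) : ℕ) + 1 < n from h1n),
      dif_neg (by simp), if_pos hKj0] at e
    rw [hMsub] at e
    have e2 : -(E • 1 - A (⟨0, hk⟩ : Fin n)) * blk g (⟨0, by omega⟩ : Fin n) (⟨0, by omega⟩ : Fin n)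
        + B (⟨0, hk⟩ : Fin n) * blk g ⟨1, h1n⟩ (⟨0, by omega⟩ : Fin n)
        + C (⟨0, hk⟩ : Fin n) * (-(C (⟨0, hk⟩ : Fin n))⁻¹) = 0 := by
      rw [show C (⟨0, hk⟩ : Fin n) * (-(C (⟨0, hk⟩ : Fin n))⁻¹)
          = -(C (⟨0, hk⟩ : Fin n) * (C (⟨0, hk⟩ : Fin n))⁻¹) from by noncomm_ring, hCi]
      rw [show -(E • 1 - A (⟨0, hk⟩ : Fin n)) * blk g (⟨0, by omega⟩ : Fin n) (⟨0, by omega⟩ : Fin n)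
          + B (⟨0, hk⟩ : Fin n) * blk g ⟨1, h1n⟩ (⟨0, by omega⟩ : Fin n) + -1
          = (-(E • 1 - A (⟨0, hk⟩ : Fin n)) * blk g (⟨0, by omega⟩ : Fin n) (⟨0, by omega⟩ : Fin n)
            + B (⟨0, hk⟩ : Fin n) * blk g ⟨1, h1n⟩ (⟨0, by omega⟩ : Fin n) + 0) + -1 from by abel, e]
      abel
    have := isolate1 (B (⟨0, hk⟩ : Fin n)) (B (⟨0, hk⟩ : Fin n))⁻¹ (C (⟨0, hk⟩ : Fin n))
      (E • 1 - A (⟨0, hk⟩ : Fin n)) (blk g (⟨0, by omega⟩ : Fin n) (⟨0, by omega⟩ : Fin n)) (blk g ⟨1, h1n⟩ (⟨0, by omega⟩ : Fin n))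
      (-(C (⟨0, hk⟩ : Fin n))⁻¹) 0 hBi e2
    rw [this]
    simp
  · have e := hrec A B C E g hg (⟨0, hk⟩ : Fin n) (⟨n - 1, by omega⟩ : Fin n)
    rw [dif_pos (show ((⟨0, hk⟩ : Fin n) : ℕ) + 1 < n from h1n),
      dif_neg (by simp), if_neg hKjn] at e
    rw [hMsub] at e
    have e2 : -(E • 1 - A (⟨0, hk⟩ : Fin n)) * blk g (⟨0, by omega⟩ : Fin n) (⟨n - 1, by omega⟩ : Fin n)
        + B (⟨0, hk⟩ : Fin n) * blk g ⟨1, h1n⟩ (⟨n - 1, by omega⟩ : Fin n)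
        + C (⟨0, hk⟩ : Fin n) * (0 : Matrix (Fin m) (Fin m) ℂ) = 0 := by
      rw [Matrix.mul_zero]; exact e
    have := isolate1 (B (⟨0, hk⟩ : Fin n)) (B (⟨0, hk⟩ : Fin n))⁻¹ (C (⟨0, hk⟩ : Fin n))
      (E • 1 - A (⟨0, hk⟩ : Fin n)) (blk g (⟨0, by omega⟩ : Fin n) (⟨n - 1, by omega⟩ : Fin n)) (blk g ⟨1, h1n⟩ (⟨n - 1, by omega⟩ : Fin n)) 0 0 hBi e2
    rw [this]
    simp


lemma stepLast {n m : ℕ} (hn : 2 ≤ n) (A B C : Fin n → Matrix (Fin m) (Fin m) ℂ)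
    (hB : ∀ k, IsUnit (B k)) (hC : ∀ k, IsUnit (C k)) (E : ℂ)
    (g : Matrix (Fin n × Fin m) (Fin n × Fin m) ℂ)
    (hg : (hopen A B C - E • 1) * g = 1) (k : ℕ) (hk : k < n)
    (hk0 : ¬ k = 0) (hkn : k + 1 = n) :
    Wseq hn B C g (k + 1) =
      tstep (A ⟨k, hk⟩) (B ⟨k, hk⟩) (C ⟨k, hk⟩) E * Wseq hn B C g k := by
  have hBi : (B (⟨k, hk⟩ : Fin n))⁻¹ * B (⟨k, hk⟩ : Fin n) = 1 :=
    Matrix.nonsing_inv_mul _ ((Matrix.isUnit_iff_isUnit_det _).mp (hB (⟨k, hk⟩ : Fin n)))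
  have hCi : C (⟨k, hk⟩ : Fin n) * (C (⟨k, hk⟩ : Fin n))⁻¹ = 1 :=
    Matrix.mul_nonsing_inv _ ((Matrix.isUnit_iff_isUnit_det _).mp (hC (⟨k, hk⟩ : Fin n)))
  have hMsub : A (⟨k, hk⟩ : Fin n) - E • (1 : Matrix (Fin m) (Fin m) ℂ)
      = -(E • 1 - A (⟨k, hk⟩ : Fin n)) := by abel
  have hKjn : (⟨k, hk⟩ : Fin n) = (⟨n - 1, by omega⟩ : Fin n) := Fin.ext (by simp; omega)
  have hKj0 : (⟨k, hk⟩ : Fin n) ≠ (⟨0, by omega⟩ : Fin n) := by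
    intro hc; rw [Fin.ext_iff] at hc; simp at hc; omega
  rw [show Wseq hn B C g k
      = Matrix.fromBlocks (blk g (⟨k, hk⟩ : Fin n) (⟨0, by omega⟩ : Fin n)) (blk g (⟨k, hk⟩ : Fin n) (⟨n - 1, by omega⟩ : Fin n))
        (blk g ⟨k - 1, by omega⟩ (⟨0, by omega⟩ : Fin n)) (blk g ⟨k - 1, by omega⟩ (⟨n - 1, by omega⟩ : Fin n)) from by
    rw [Wseq]; rw [if_neg hk0, dif_pos hk]]
  rw [show Wseq hn B C g (k + 1)
      = Matrix.fromBlocks 0 (-(B (⟨n - 1, by omega⟩ : Fin n))⁻¹) (blk g (⟨n - 1, by omega⟩ : Fin n) (⟨0, by omega⟩ : Fin n)) (blk g (⟨n - 1, by omega⟩ : Fin n) (⟨n - 1, by omega⟩ : Fin n)) from by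
    rw [Wseq]; rw [if_neg (by omega), dif_neg (by omega)]]
  rw [tstep, Matrix.fromBlocks_multiply, Matrix.fromBlocks_inj, ← hKjn]
  refine ⟨?_, ?_, by simp, by simp⟩
  · have e := hrec A B C E g hg (⟨k, hk⟩ : Fin n) (⟨0, by omega⟩ : Fin n)
    rw [dif_neg (show ¬ (((⟨k, hk⟩ : Fin n) : ℕ) + 1 < n) from by simp; omega),
      dif_pos (show 0 < ((⟨k, hk⟩ : Fin n) : ℕ) from by simp; omega), if_neg hKj0] at e
    rw [hMsub] at e
    have := isolate2 (B (⟨k, hk⟩ : Fin n))⁻¹ (C (⟨k, hk⟩ : Fin n)) (E • 1 - A (⟨k, hk⟩ : Fin n)) (blk g (⟨k, hk⟩ : Fin n) (⟨0, by omega⟩ : Fin n))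
      (blk g ⟨((⟨k, hk⟩ : Fin n) : ℕ) - 1, by omega⟩ (⟨0, by omega⟩ : Fin n)) 0 e
    rw [show (⟨((⟨k, hk⟩ : Fin n) : ℕ) - 1, by omega⟩ : Fin n) = (⟨k - 1, by omega⟩ : Fin n) from
      Fin.ext (by simp)] at this
    rw [this]
    simp
  · have e := hrec A B C E g hg (⟨k, hk⟩ : Fin n) (⟨k, hk⟩ : Fin n)
    rw [dif_neg (show ¬ (((⟨k, hk⟩ : Fin n) : ℕ) + 1 < n) from by simp; omega),
      dif_pos (show 0 < ((⟨k, hk⟩ : Fin n) : ℕ) from by simp; omega), if_pos rfl] at e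
    rw [hMsub] at e
    have := isolate2 (B (⟨k, hk⟩ : Fin n))⁻¹ (C (⟨k, hk⟩ : Fin n)) (E • 1 - A (⟨k, hk⟩ : Fin n)) (blk g (⟨k, hk⟩ : Fin n) (⟨k, hk⟩ : Fin n))
      (blk g ⟨((⟨k, hk⟩ : Fin n) : ℕ) - 1, by omega⟩ (⟨k, hk⟩ : Fin n)) 1 e
    rw [show (⟨((⟨k, hk⟩ : Fin n) : ℕ) - 1, by omega⟩ : Fin n) = (⟨k - 1, by omega⟩ : Fin n) from
      Fin.ext (by simp)] at this
    rw [this]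
    simp


lemma stepMid {n m : ℕ} (hn : 2 ≤ n) (A B C : Fin n → Matrix (Fin m) (Fin m) ℂ)
    (hB : ∀ k, IsUnit (B k)) (hC : ∀ k, IsUnit (C k)) (E : ℂ)
    (g : Matrix (Fin n × Fin m) (Fin n × Fin m) ℂ)
    (hg : (hopen A B C - E • 1) * g = 1) (k : ℕ) (hk : k < n)
    (hk0 : ¬ k = 0) (hkn : ¬ k + 1 = n) :
    Wseq hn B C g (k + 1) =
      tstep (A ⟨k, hk⟩) (B ⟨k, hk⟩) (C ⟨k, hk⟩) E * Wseq hn B C g k := by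
  have hBi : (B (⟨k, hk⟩ : Fin n))⁻¹ * B (⟨k, hk⟩ : Fin n) = 1 :=
    Matrix.nonsing_inv_mul _ ((Matrix.isUnit_iff_isUnit_det _).mp (hB (⟨k, hk⟩ : Fin n)))
  have hCi : C (⟨k, hk⟩ : Fin n) * (C (⟨k, hk⟩ : Fin n))⁻¹ = 1 :=
    Matrix.mul_nonsing_inv _ ((Matrix.isUnit_iff_isUnit_det _).mp (hC (⟨k, hk⟩ : Fin n)))
  have hMsub : A (⟨k, hk⟩ : Fin n) - E • (1 : Matrix (Fin m) (Fin m) ℂ)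
      = -(E • 1 - A (⟨k, hk⟩ : Fin n)) := by abel
  have hk1n : k + 1 < n := by omega
  have hKj0 : (⟨k, hk⟩ : Fin n) ≠ (⟨0, by omega⟩ : Fin n) := by
    intro hc; rw [Fin.ext_iff] at hc; simp at hc; omega
  have hKjn : (⟨k, hk⟩ : Fin n) ≠ (⟨n - 1, by omega⟩ : Fin n) := by
    intro hc; rw [Fin.ext_iff] at hc; simp at hc; omega
  rw [show Wseq hn B C g k
      = Matrix.fromBlocks (blk g (⟨k, hk⟩ : Fin n) (⟨0, by omega⟩ : Fin n)) (blk g (⟨k, hk⟩ : Fin n) (⟨n - 1, by omega⟩ : Fin n))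
        (blk g ⟨k - 1, by omega⟩ (⟨0, by omega⟩ : Fin n)) (blk g ⟨k - 1, by omega⟩ (⟨n - 1, by omega⟩ : Fin n)) from by
    rw [Wseq]; rw [if_neg hk0, dif_pos hk]]
  rw [show Wseq hn B C g (k + 1)
      = Matrix.fromBlocks (blk g ⟨k + 1, hk1n⟩ (⟨0, by omega⟩ : Fin n)) (blk g ⟨k + 1, hk1n⟩ (⟨n - 1, by omega⟩ : Fin n))
        (blk g (⟨k, hk⟩ : Fin n) (⟨0, by omega⟩ : Fin n)) (blk g (⟨k, hk⟩ : Fin n) (⟨n - 1, by omega⟩ : Fin n)) from by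
    rw [Wseq]; rw [if_neg (by omega), dif_pos hk1n]
    simp only [Nat.add_sub_cancel]]
  rw [tstep, Matrix.fromBlocks_multiply, Matrix.fromBlocks_inj]
  refine ⟨?_, ?_, by simp, by simp⟩
  · have e := hrec A B C E g hg (⟨k, hk⟩ : Fin n) (⟨0, by omega⟩ : Fin n)
    rw [dif_pos (show ((⟨k, hk⟩ : Fin n) : ℕ) + 1 < n from hk1n),
      dif_pos (show 0 < ((⟨k, hk⟩ : Fin n) : ℕ) from by simp; omega), if_neg hKj0] at e
    rw [hMsub] at e
    have := isolate1 (B (⟨k, hk⟩ : Fin n)) (B (⟨k, hk⟩ : Fin n))⁻¹ (C (⟨k, hk⟩ : Fin n)) (E • 1 - A (⟨k, hk⟩ : Fin n)) (blk g (⟨k, hk⟩ : Fin n) (⟨0, by omega⟩ : Fin n))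
      (blk g ⟨((⟨k, hk⟩ : Fin n) : ℕ) + 1, hk1n⟩ (⟨0, by omega⟩ : Fin n)) (blk g ⟨((⟨k, hk⟩ : Fin n) : ℕ) - 1, by omega⟩ (⟨0, by omega⟩ : Fin n)) 0 hBi e
    rw [show (⟨((⟨k, hk⟩ : Fin n) : ℕ) - 1, by omega⟩ : Fin n) = (⟨k - 1, by omega⟩ : Fin n) from
      Fin.ext (by simp)] at this
    rw [this]
    simp
  · have e := hrec A B C E g hg (⟨k, hk⟩ : Fin n) (⟨n - 1, by omega⟩ : Fin n)
    rw [dif_pos (show ((⟨k, hk⟩ : Fin n) : ℕ) + 1 < n from hk1n),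
      dif_pos (show 0 < ((⟨k, hk⟩ : Fin n) : ℕ) from by simp; omega), if_neg hKjn] at e
    rw [hMsub] at e
    have := isolate1 (B (⟨k, hk⟩ : Fin n)) (B (⟨k, hk⟩ : Fin n))⁻¹ (C (⟨k, hk⟩ : Fin n)) (E • 1 - A (⟨k, hk⟩ : Fin n)) (blk g (⟨k, hk⟩ : Fin n) (⟨n - 1, by omega⟩ : Fin n))
      (blk g ⟨((⟨k, hk⟩ : Fin n) : ℕ) + 1, hk1n⟩ (⟨n - 1, by omega⟩ : Fin n)) (blk g ⟨((⟨k, hk⟩ : Fin n) : ℕ) - 1, by omega⟩ (⟨n - 1, by omega⟩ : Fin n)) 0 hBi e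
    rw [show (⟨((⟨k, hk⟩ : Fin n) : ℕ) - 1, by omega⟩ : Fin n) = (⟨k - 1, by omega⟩ : Fin n) from
      Fin.ext (by simp)] at this
    rw [this]
    simp


lemma step {n m : ℕ} (hn : 2 ≤ n) (A B C : Fin n → Matrix (Fin m) (Fin m) ℂ)
    (hB : ∀ k, IsUnit (B k)) (hC : ∀ k, IsUnit (C k)) (E : ℂ)
    (g : Matrix (Fin n × Fin m) (Fin n × Fin m) ℂ)
    (hg : (hopen A B C - E • 1) * g = 1) (k : ℕ) (hk : k < n) :
    Wseq hn B C g (k + 1) =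
      tstep (A ⟨k, hk⟩) (B ⟨k, hk⟩) (C ⟨k, hk⟩) E * Wseq hn B C g k := by
  by_cases hk0 : k = 0
  · exact step0 hn A B C hB hC E g hg k hk hk0
  · by_cases hkn : k + 1 = n
    · exact stepLast hn A B C hB hC E g hg k hk hk0 hkn
    · exact stepMid hn A B C hB hC E g hg k hk hk0 hkn

noncomputable def Tseq {n m : ℕ} (A B C : Fin n → Matrix (Fin m) (Fin m) ℂ) (E : ℂ) :
    ℕ → Matrix (Fin m ⊕ Fin m) (Fin m ⊕ Fin m) ℂ := fun k =>
  if h : k < n then tstep (A ⟨k, h⟩) (B ⟨k, h⟩) (C ⟨k, h⟩) E else 1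

lemma transfer_eq {n m : ℕ} (A B C : Fin n → Matrix (Fin m) (Fin m) ℂ) (E : ℂ) :
    transfer A B C E = ((List.ofFn fun i : Fin n => Tseq A B C E i).reverse).prod := by
  have h : (fun i : Fin n => Tseq A B C E (i : ℕ))
      = fun k : Fin n => tstep (A k) (B k) (C k) E := by
    funext i; simp [Tseq, i.isLt]
  rw [transfer, h]

/-- `[[0, -B_n⁻¹],[g_{n,1}, g_{n,n}]] = T(E) · [[g_{1,1}, g_{1,n}],[-C_1⁻¹, 0]]`,
where `g(E) = (h - E·1)⁻¹`. -/
theorem stmt6 {n m : ℕ} (hn : 2 ≤ n) (hm : 1 ≤ m)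
    (A B C : Fin n → Matrix (Fin m) (Fin m) ℂ)
    (hB : ∀ k, IsUnit (B k)) (hC : ∀ k, IsUnit (C k)) (E : ℂ)
    (hE : IsUnit (hopen A B C - E • 1).det) :
    let g := (hopen A B C - E • 1)⁻¹
    Matrix.fromBlocks 0 (-(B ⟨n - 1, by omega⟩)⁻¹)
        (blk g ⟨n - 1, by omega⟩ ⟨0, by omega⟩) (blk g ⟨n - 1, by omega⟩ ⟨n - 1, by omega⟩) =
      transfer A B C E *
        Matrix.fromBlocks (blk g ⟨0, by omega⟩ ⟨0, by omega⟩)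
          (blk g ⟨0, by omega⟩ ⟨n - 1, by omega⟩) (-(C ⟨0, by omega⟩)⁻¹) 0 := by
  intro g
  have hg : (hopen A B C - E • 1) * g = 1 := Matrix.mul_nonsing_inv _ hE
  have key := prod_rec (Tseq A B C E) (Wseq hn B C g) n
    (fun k hk => by
      rw [show Tseq A B C E k = tstep (A ⟨k, hk⟩) (B ⟨k, hk⟩) (C ⟨k, hk⟩) E from by
        rw [Tseq, dif_pos hk]]
      exact step hn A B C hB hC E g hg k hk)
  rw [transfer_eq]
  rw [show Matrix.fromBlocks (blk g ⟨0, by omega⟩ ⟨0, by omega⟩)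
      (blk g ⟨0, by omega⟩ ⟨n - 1, by omega⟩) (-(C ⟨0, by omega⟩)⁻¹) 0
      = Wseq hn B C g 0 from by rw [Wseq]; rw [if_pos rfl]]
  rw [key]
  rw [Wseq]
  rw [if_neg (by omega), dif_neg (by omega)]
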